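/- Let 1 ≤ p < ∞ and let X = ℓ^p(A₀) be the Banach space of p-summable complex sequences indexed by A₀ = ℤ \ {0}. Suppose z = (z_j)_{j ∈ A₀} ∈ X satisfies either (there exists j₀ ≥ 1 with |z_{j₀}| > 1 and |z_j| ≤ 1 for every j ≤ −1) or (there exists j₀ ≤ −1 with |z_{j₀}| > 1 and |z_j| ≤ 1 for every j ≥ 1). Then there exists a natural number k with k ≥ p such that the supersymmetric polynomial T_k(x) = ∑_{j≥1} x_j^k − ∑_{j≤−1} x_j^k (both series converging absolutely for k ≥ p) separates z from the closed unit ball of X: |T_k(z)| > 1 and |T_k(x)| ≤ 1 for every x ∈ X with ‖x‖_p ≤ 1. -/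

import Mathlib

open scoped ENNReal

/-- The index set `A₀ = ℤ \ {0}`. -/
def NonzeroInt : Type := {j : ℤ // j ≠ 0}

instance : DecidableEq NonzeroInt := fun a b =>
  decidable_of_iff (a.1 = b.1) Subtype.ext_iff.symm

lemma aux_pow_sub_one (v : ℂ) (hv : ‖v‖ = 1) : ∀ r : ℕ, ‖v ^ r - 1‖ ≤ r * ‖v - 1‖
  | 0 => by simp
  | (r+1) => by
      have h1 : v ^ (r+1) - 1 = v ^ r * (v - 1) + (v ^ r - 1) := by ring
      calc ‖v ^ (r+1) - 1‖ ≤ ‖v ^ r * (v - 1)‖ + ‖v ^ r - 1‖ := by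
            rw [h1]; exact norm_add_le _ _
        _ ≤ ‖v - 1‖ + r * ‖v - 1‖ := by
            rw [norm_mul, norm_pow, hv, one_pow, one_mul]
            exact add_le_add le_rfl (aux_pow_sub_one v hv r)
        _ = (r+1 : ℕ) * ‖v - 1‖ := by push_cast; ring

lemma aux_close {ι : Type*} (s : Finset ι) (w : ι → ℂ)
    (hw : ∀ j ∈ s, ‖w j‖ = 1) {ε : ℝ} (hε : 0 < ε) :
    ∃ k : ℕ, 1 ≤ k ∧ ∀ j ∈ s, ‖w j ^ k - 1‖ < ε := by
  classical
  set u : ℕ → (↥s → ℂ) := fun k j => (w j.1) ^ k with hu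
  have hmem : ∀ k, u k ∈ Metric.closedBall (0 : ↥s → ℂ) 1 := by
    intro k
    rw [Metric.mem_closedBall, dist_zero_right]
    refine (pi_norm_le_iff_of_nonneg zero_le_one).2 fun j => ?_
    rw [hu]; simp only []
    rw [norm_pow, hw j.1 j.2, one_pow]
  obtain ⟨x, -, φ, hφ, hlim⟩ :=
    (isCompact_closedBall (0 : ↥s → ℂ) 1).tendsto_subseq hmem
  obtain ⟨N, hN⟩ := Metric.tendsto_atTop.1 hlim (ε/2) (half_pos hε)
  have hφlt : φ N < φ (N+1) := hφ (Nat.lt_succ_self N)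
  refine ⟨φ (N+1) - φ N, by omega, ?_⟩
  intro j hj
  have h1 : dist (u (φ (N+1))) (u (φ N)) < ε := by
    have hA := hN (N+1) (Nat.le_succ N)
    have hB := hN N le_rfl
    calc dist (u (φ (N+1))) (u (φ N))
        ≤ dist (u (φ (N+1))) x + dist (u (φ N)) x := dist_triangle_right _ _ _
      _ < ε/2 + ε/2 := add_lt_add hA hB
      _ = ε := add_halves ε
  have h2 : dist (u (φ (N+1)) ⟨j, hj⟩) (u (φ N) ⟨j, hj⟩) < ε :=
    lt_of_le_of_lt (dist_le_pi_dist _ _ _) h1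
  have hkey : w j ^ (φ (N+1)) - w j ^ (φ N)
      = w j ^ (φ N) * (w j ^ (φ (N+1) - φ N) - 1) := by
    rw [mul_sub, mul_one, ← pow_add]
    have he : φ N + (φ (N+1) - φ N) = φ (N+1) := by omega
    rw [he]
  have h3 : ‖w j ^ (φ (N+1)) - w j ^ (φ N)‖ = ‖w j ^ (φ (N+1) - φ N) - 1‖ := by
    rw [hkey, norm_mul, norm_pow, hw j hj, one_pow, one_mul]
  have h4 : dist (u (φ (N+1)) ⟨j, hj⟩) (u (φ N) ⟨j, hj⟩)
      = ‖w j ^ (φ (N+1)) - w j ^ (φ N)‖ := by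
    rw [dist_eq_norm]
  rw [h4, h3] at h2
  exact h2

lemma aux_close' {ι : Type*} (s : Finset ι) (w : ι → ℂ)
    (hw : ∀ j ∈ s, ‖w j‖ = 1) {ε : ℝ} (hε : 0 < ε) (K : ℕ) :
    ∃ k : ℕ, K ≤ k ∧ ∀ j ∈ s, ‖w j ^ k - 1‖ < ε := by
  set r : ℕ := max K 1 with hr
  have hr1 : 1 ≤ r := le_max_right _ _
  have hrR : (0:ℝ) < r := by exact_mod_cast Nat.lt_of_lt_of_le Nat.zero_lt_one hr1
  obtain ⟨k₀, hk₀1, hk₀⟩ := aux_close s w hw (ε := ε / r) (by positivity)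
  refine ⟨r * k₀, le_trans (le_max_left K 1) (Nat.le_mul_of_pos_right r hk₀1), ?_⟩
  intro j hj
  have hv : ‖w j ^ k₀‖ = 1 := by rw [norm_pow, hw j hj, one_pow]
  calc ‖w j ^ (r * k₀) - 1‖ = ‖(w j ^ k₀) ^ r - 1‖ := by rw [← pow_mul, Nat.mul_comm]
    _ ≤ r * ‖w j ^ k₀ - 1‖ := aux_pow_sub_one _ hv r
    _ < r * (ε / r) := by exact mul_lt_mul_of_pos_left (hk₀ j hj) hrR
    _ = ε := by field_simp

lemma aux_pow_le_rpow {a : ℝ} (h0 : 0 ≤ a) (h1 : a ≤ 1) {q : ℝ} (hq : 0 < q)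
    {k : ℕ} (hk : q ≤ k) : a ^ k ≤ a ^ q := by
  rcases h0.eq_or_lt with h|h
  · have hkR : (0:ℝ) < k := lt_of_lt_of_le hq hk
    have hk0 : k ≠ 0 := by rintro rfl; norm_num at hkR
    rw [← h, zero_pow hk0, Real.zero_rpow hq.ne']
  · rw [← Real.rpow_natCast a k]
    exact Real.rpow_le_rpow_of_exponent_ge h h1 hk

/-- Let `1 ≤ p < ∞` and `X = ℓ^p(A₀)` with `A₀ = ℤ \ {0}`. If
`z ∈ X` has some coordinate of modulus `> 1` on the positive side while all negative
coordinates have modulus `≤ 1` (or vice versa), then some supersymmetric polynomial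
`T_k(x) = ∑_{j ≥ 1} x_j^k − ∑_{j ≤ −1} x_j^k` with `k ≥ p` (both series converging
absolutely) separates `z` from the closed unit ball: `|T_k(z)| > 1` and `|T_k(x)| ≤ 1`
whenever `‖x‖ ≤ 1`. -/
theorem statement16 (p : ℝ≥0∞) [Fact (1 ≤ p)] (hp : p ≠ ∞)
    (z : lp (fun _ : NonzeroInt => ℂ) p)
    (hz : (∃ j₀ : NonzeroInt, 0 < j₀.1 ∧ 1 < ‖z j₀‖ ∧ ∀ j : NonzeroInt, j.1 < 0 → ‖z j‖ ≤ 1) ∨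
      (∃ j₀ : NonzeroInt, j₀.1 < 0 ∧ 1 < ‖z j₀‖ ∧ ∀ j : NonzeroInt, 0 < j.1 → ‖z j‖ ≤ 1)) :
    ∃ k : ℕ, p ≤ (k : ℝ≥0∞) ∧
      Summable (fun j : NonzeroInt => ‖(z j) ^ k‖) ∧
      1 < ‖∑' j : NonzeroInt, (if 0 < j.1 then (z j) ^ k else -((z j) ^ k))‖ ∧
      ∀ x : lp (fun _ : NonzeroInt => ℂ) p, ‖x‖ ≤ 1 →
        Summable (fun j : NonzeroInt => ‖(x j) ^ k‖) ∧
        ‖∑' j : NonzeroInt, (if 0 < j.1 then (x j) ^ k else -((x j) ^ k))‖ ≤ 1 := by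
  classical
  have hp1 : (1:ℝ≥0∞) ≤ p := Fact.out
  have hq1 : (1:ℝ) ≤ p.toReal := by
    have := ENNReal.toReal_mono hp hp1
    simpa using this
  set q : ℝ := p.toReal with hqdef
  have hq0 : 0 < q := lt_of_lt_of_le one_pos hq1
  -- finiteness of the set of large coordinates, for any element
  have key_fin : ∀ x : lp (fun _ : NonzeroInt => ℂ) p,
      {j : NonzeroInt | 1 < ‖x j‖}.Finite := by
    intro x
    have hsq : Summable (fun j : NonzeroInt => ‖x j‖ ^ q) := (lp.memℓp x).summable hq0
    have h1 : ∀ᶠ j in Filter.cofinite, ‖x j‖ ^ q < 1 :=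
      hsq.tendsto_cofinite_zero.eventually_lt_const one_pos
    refine (Filter.eventually_cofinite.mp h1).subset ?_
    intro j hj
    simp only [Set.mem_setOf_eq] at hj ⊢
    have : (1:ℝ) = 1 ^ q := (Real.one_rpow q).symm
    refine not_lt.mpr ?_
    calc (1:ℝ) = 1 ^ q := (Real.one_rpow q).symm
      _ ≤ ‖x j‖ ^ q := Real.rpow_le_rpow zero_le_one hj.le hq0.le
  have key_sum : ∀ (x : lp (fun _ : NonzeroInt => ℂ) p) (k : ℕ), q ≤ (k:ℝ) →
      Summable (fun j : NonzeroInt => ‖x j‖ ^ k) := by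
    intro x k hk
    have hsq : Summable (fun j : NonzeroInt => ‖x j‖ ^ q) := (lp.memℓp x).summable hq0
    rw [← (key_fin x).summable_compl_iff]
    refine Summable.of_nonneg_of_le (fun j => pow_nonneg (norm_nonneg _) k)
      (fun j => ?_) (hsq.subtype _)
    have hj1 : ‖x j.1‖ ≤ 1 := le_of_not_gt j.2
    exact aux_pow_le_rpow (norm_nonneg _) hj1 hq0 hk
  have key_ball : ∀ (k : ℕ), q ≤ (k:ℝ) → ∀ x : lp (fun _ : NonzeroInt => ℂ) p, ‖x‖ ≤ 1 →
      Summable (fun j : NonzeroInt => ‖(x j) ^ k‖) ∧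
      ‖∑' j : NonzeroInt, (if 0 < j.1 then (x j) ^ k else -((x j) ^ k))‖ ≤ 1 := by
    intro k hk x hx
    have hsq : Summable (fun j : NonzeroInt => ‖x j‖ ^ q) := (lp.memℓp x).summable hq0
    have hp0 : p ≠ 0 := (lt_of_lt_of_le zero_lt_one hp1).ne'
    have hxj : ∀ j, ‖x j‖ ≤ 1 := fun j => (lp.norm_apply_le_norm hp0 x j).trans hx
    have hle : ∀ j : NonzeroInt, ‖x j‖ ^ k ≤ ‖x j‖ ^ q :=
      fun j => aux_pow_le_rpow (norm_nonneg _) (hxj j) hq0 hk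
    have hsum : Summable (fun j : NonzeroInt => ‖x j‖ ^ k) :=
      Summable.of_nonneg_of_le (fun j => pow_nonneg (norm_nonneg _) k) hle hsq
    have hnorm : ∀ j : NonzeroInt, ‖(x j) ^ k‖ = ‖x j‖ ^ k := fun j => norm_pow _ _
    constructor
    · simpa only [hnorm] using hsum
    · have hgnorm : ∀ j : NonzeroInt,
          ‖(if 0 < j.1 then (x j) ^ k else -((x j) ^ k))‖ = ‖x j‖ ^ k := by
        intro j; split <;> simp [norm_pow]
      have hgsum : Summable
          (fun j : NonzeroInt => ‖(if 0 < j.1 then (x j) ^ k else -((x j) ^ k))‖) := by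
        simpa only [hgnorm] using hsum
      calc ‖∑' j : NonzeroInt, (if 0 < j.1 then (x j) ^ k else -((x j) ^ k))‖
          ≤ ∑' j : NonzeroInt, ‖(if 0 < j.1 then (x j) ^ k else -((x j) ^ k))‖ :=
            norm_tsum_le_tsum_norm hgsum
        _ = ∑' j : NonzeroInt, ‖x j‖ ^ k := tsum_congr hgnorm
        _ ≤ ∑' j : NonzeroInt, ‖x j‖ ^ q := Summable.tsum_le_tsum hle hsum hsq
        _ = ‖x‖ ^ q := (lp.norm_rpow_eq_tsum hq0 x).symm
        _ ≤ 1 := Real.rpow_le_one (norm_nonneg _) hx hq0.le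
  -- extract a single-sided description
  obtain ⟨j₀, hj₀big, hside⟩ :
      ∃ j₀ : NonzeroInt, 1 < ‖z j₀‖ ∧
        ((∀ j : NonzeroInt, 1 < ‖z j‖ → 0 < j.1) ∨
         (∀ j : NonzeroInt, 1 < ‖z j‖ → j.1 < 0)) := by
    rcases hz with ⟨j₀, _, hbig, hsmall⟩ | ⟨j₀, _, hbig, hsmall⟩
    · refine ⟨j₀, hbig, Or.inl fun j hj => ?_⟩
      rcases (Ne.lt_or_gt j.2) with h|h
      · exact absurd (hsmall j h) (not_le.mpr hj)
      · exact h
    · refine ⟨j₀, hbig, Or.inr fun j hj => ?_⟩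
      rcases (Ne.lt_or_gt j.2) with h|h
      · exact h
      · exact absurd (hsmall j h) (not_le.mpr hj)
  have hsq : Summable (fun j : NonzeroInt => ‖z j‖ ^ q) := (lp.memℓp z).summable hq0
  have hfin := key_fin z
  set B : Finset NonzeroInt := hfin.toFinset with hBdef
  have hj₀B : j₀ ∈ B := hfin.mem_toFinset.mpr hj₀big
  set w : NonzeroInt → ℂ := fun j => z j / (‖z j‖ : ℂ) with hwdef
  have hwnorm : ∀ j ∈ B, ‖w j‖ = 1 := by
    intro j hj
    have h1 : 1 < ‖z j‖ := hfin.mem_toFinset.mp hj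
    have h0 : ‖z j‖ ≠ 0 := (lt_trans zero_lt_one h1).ne'
    simp only [hwdef, norm_div, Complex.norm_real, Real.norm_eq_abs,
      abs_of_pos (lt_trans zero_lt_one h1)]
    rw [div_self h0]
  set C : ℝ := ∑' j : NonzeroInt, ‖z j‖ ^ q with hCdef
  have hC0 : 0 ≤ C :=
    tsum_nonneg fun j => Real.rpow_nonneg (norm_nonneg _) q
  obtain ⟨K₁, hK₁⟩ := Filter.eventually_atTop.mp
    ((tendsto_pow_atTop_atTop_of_one_lt hj₀big).eventually_ge_atTop (2*C + 3))
  obtain ⟨k, hkK, hclose⟩ := aux_close' B w hwnorm (ε := 1/2) one_half_pos (max K₁ ⌈q⌉₊)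
  have hqk : q ≤ (k:ℝ) := by
    refine le_trans (Nat.le_ceil q) ?_
    exact_mod_cast le_trans (le_max_right K₁ ⌈q⌉₊) hkK
  refine ⟨k, ?_, ?_, ?_, key_ball k hqk⟩
  · rw [← ENNReal.ofReal_toReal hp, ← ENNReal.ofReal_natCast]
    exact ENNReal.ofReal_le_ofReal hqk
  · have := key_sum z k hqk
    simpa only [norm_pow] using this
  · set g : NonzeroInt → ℂ := fun j => if 0 < j.1 then (z j) ^ k else -((z j) ^ k) with hgdef
    have hgnorm : ∀ j, ‖g j‖ = ‖z j‖ ^ k := by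
      intro j; simp only [hgdef]; split <;> simp [norm_pow]
    have hgsum_norm : Summable (fun j => ‖g j‖) := by
      simpa only [hgnorm] using key_sum z k hqk
    have hgsum : Summable g := hgsum_norm.of_norm
    have hsplit : (∑ j ∈ B, g j) + ∑' j : {x // x ∉ B}, g j.1 = ∑' j : NonzeroInt, g j :=
      Summable.sum_add_tsum_compl (s := B) hgsum
    have hRsum : Summable (fun j : {x // x ∉ B} => ‖g j.1‖) :=
      hgsum_norm.comp_injective Subtype.val_injective
    have hRqsum : Summable (fun j : {x // x ∉ B} => ‖z j.1‖ ^ q) :=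
      hsq.comp_injective Subtype.val_injective
    have hRnorm : ‖∑' j : {x // x ∉ B}, g j.1‖ ≤ C := by
      have hstep : ∀ j : {x // x ∉ B}, ‖g j.1‖ ≤ ‖z j.1‖ ^ q := by
        intro j
        have hj1 : ‖z j.1‖ ≤ 1 :=
          le_of_not_gt fun h => j.2 (hfin.mem_toFinset.mpr h)
        rw [hgnorm]
        exact aux_pow_le_rpow (norm_nonneg _) hj1 hq0 hqk
      have h2 : (∑ j ∈ B, ‖z j‖ ^ q) + ∑' j : {x // x ∉ B}, ‖z j.1‖ ^ q
          = ∑' j : NonzeroInt, ‖z j‖ ^ q := Summable.sum_add_tsum_compl (s := B) hsq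
      have h3 : 0 ≤ ∑ j ∈ B, ‖z j‖ ^ q :=
        Finset.sum_nonneg fun j _ => Real.rpow_nonneg (norm_nonneg _) _
      calc ‖∑' j : {x // x ∉ B}, g j.1‖
          ≤ ∑' j : {x // x ∉ B}, ‖g j.1‖ := norm_tsum_le_tsum_norm hRsum
        _ ≤ ∑' j : {x // x ∉ B}, ‖z j.1‖ ^ q := Summable.tsum_le_tsum hstep hRsum hRqsum
        _ ≤ C := by rw [hCdef]; linarith [h2, h3]
    have hre : ∀ j ∈ B, 1/2 * ‖z j‖ ^ k ≤ ((z j) ^ k).re := by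
      intro j hj
      have h1 : 1 < ‖z j‖ := hfin.mem_toFinset.mp hj
      have h0 : (‖z j‖ : ℂ) ≠ 0 := by
        exact_mod_cast (lt_trans zero_lt_one h1).ne'
      have hzj : (‖z j‖ : ℂ) * w j = z j := by
        simp only [hwdef]
        rw [mul_comm]
        exact div_mul_cancel₀ _ h0
      have hwk : ‖w j ^ k - 1‖ < 1/2 := hclose j hj
      have hwre : (1:ℝ)/2 ≤ (w j ^ k).re := by
        have h5 := Complex.abs_re_le_norm (w j ^ k - 1)
        have h6 : |(w j ^ k).re - 1| < 1/2 := by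
          refine lt_of_le_of_lt ?_ hwk
          simpa [Complex.sub_re, Complex.one_re] using h5
        have h7 := abs_lt.mp h6
        linarith [h7.1]
      have h8 : ((z j) ^ k).re = ‖z j‖ ^ k * (w j ^ k).re := by
        conv_lhs => rw [← hzj]
        rw [mul_pow, ← Complex.ofReal_pow, Complex.re_ofReal_mul]
      rw [h8]
      have hpow : (0:ℝ) ≤ ‖z j‖ ^ k := pow_nonneg (norm_nonneg _) k
      nlinarith [hwre, hpow]
    have hSre : 1/2 * ‖z j₀‖ ^ k ≤ (∑ j ∈ B, (z j) ^ k).re := by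
      rw [Complex.re_sum]
      calc 1/2 * ‖z j₀‖ ^ k ≤ ((z j₀) ^ k).re := hre j₀ hj₀B
        _ ≤ ∑ j ∈ B, ((z j) ^ k).re := by
            refine Finset.single_le_sum (f := fun j : NonzeroInt => ((z j) ^ k).re)
              (fun j hj => ?_) hj₀B
            refine le_trans ?_ (hre j hj)
            positivity
    have hSnorm : 1/2 * ‖z j₀‖ ^ k ≤ ‖∑ j ∈ B, g j‖ := by
      have hsum_eq : ‖∑ j ∈ B, g j‖ = ‖∑ j ∈ B, (z j) ^ k‖ := by
        rcases hside with hs|hs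
        · congr 1
          refine Finset.sum_congr rfl fun j hj => ?_
          simp only [hgdef]
          exact if_pos (hs j (hfin.mem_toFinset.mp hj))
        · have heq : ∑ j ∈ B, g j = -∑ j ∈ B, (z j) ^ k := by
            rw [← Finset.sum_neg_distrib]
            refine Finset.sum_congr rfl fun j hj => ?_
            simp only [hgdef]
            exact if_neg (not_lt.mpr (hs j (hfin.mem_toFinset.mp hj)).le)
          rw [heq, norm_neg]
      rw [hsum_eq]
      refine le_trans hSre ?_
      exact Complex.re_le_norm _
    have hbigk : 2*C + 3 ≤ ‖z j₀‖ ^ k :=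
      hK₁ k (le_trans (le_max_left _ _) hkK)
    have hfinal : ‖∑ j ∈ B, g j‖ - C ≤ ‖∑' j : NonzeroInt, g j‖ := by
      have h9 : ‖∑ j ∈ B, g j‖ ≤
          ‖(∑ j ∈ B, g j) + ∑' j : {x // x ∉ B}, g j.1‖ + ‖∑' j : {x // x ∉ B}, g j.1‖ := by
        have := norm_add_le ((∑ j ∈ B, g j) + ∑' j : {x // x ∉ B}, g j.1)
          (-(∑' j : {x // x ∉ B}, g j.1))
        simpa using this
      rw [← hsplit]
      linarith [hRnorm, h9]
    show 1 < ‖∑' j : NonzeroInt, g j‖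
    linarith [hfinal, hSnorm, hbigk, hC0, hRnorm]
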